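/- Let (e_n) be a monotonically decreasing positive sequence converging to 0 such that for some l₀ ≥ 1, n₀ ≥ l₀, C₀ > 0 and θ ∈ [1/2, 1), e_{n-l₀} - e_n ≥ C₀ e_n^{2θ} for all n ≥ n₀. Then there exists C₂ > 0 such that e_n ≤ C₂ (n - l₀ + 1)^{-1/(2θ-1)} for all n ≥ n₀ + l₀ (sublinear polynomial rate). -/

import Mathlib

open Filter Topology

/-- Auxiliary step inequality: if `a ≥ b + C₀ b^{1+β}` with everything positive and
`C₀ b^β ≤ T`, then `a^{-β} + βC₀/(1+T)² ≤ b^{-β}`. -/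
lemma kl_step_aux (a b C₀ β T : ℝ) (ha : 0 < a) (hb : 0 < b) (hβ : 0 < β) (hβ1 : β < 1)
    (hC₀ : 0 < C₀) (hT : 0 < T) (hbT : C₀ * b ^ β ≤ T)
    (hrec : C₀ * b ^ (1 + β) ≤ a - b) :
    a ^ (-β) + β * C₀ / ((1 + T) * (1 + T)) ≤ b ^ (-β) := by
  set t : ℝ := C₀ * b ^ β with htdef
  have ht : 0 < t := mul_pos hC₀ (Real.rpow_pos_of_pos hb β)
  clear_value t
  set u : ℝ := t / (1 + t) with hudef
  have hu0 : 0 < u := by positivity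
  clear_value u
  have hut : u ≤ t := by
    rw [hudef]; exact div_le_self ht.le (by linarith)
  -- log (1+t) ≥ t/(1+t)
  have hlog : u ≤ Real.log (1 + t) := by
    have h2 := Real.log_le_sub_one_of_pos (show (0:ℝ) < (1 + t)⁻¹ by positivity)
    rw [Real.log_inv] at h2
    have h3 : u = 1 - (1 + t)⁻¹ := by
      rw [hudef]; field_simp; ring
    rw [h3]; linarith
  -- (1+t)^β ≥ 1 + β u
  have hpow : 1 + β * u ≤ (1 + t) ^ β := by
    rw [Real.rpow_def_of_pos (by linarith : (0:ℝ) < 1 + t)]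
    have h4 := Real.add_one_le_exp (Real.log (1 + t) * β)
    have h5 : β * u ≤ Real.log (1 + t) * β := by
      rw [mul_comm]
      exact mul_le_mul_of_nonneg_right hlog hβ.le
    linarith
  have hD : (0:ℝ) < 1 + β * u := by positivity
  -- (1+t)^(-β) ≤ (1 + β u)⁻¹
  have hinv : (1 + t) ^ (-β) ≤ (1 + β * u)⁻¹ := by
    rw [Real.rpow_neg (by linarith : (0:ℝ) ≤ 1 + t)]
    exact inv_anti₀ hD hpow
  -- a ≥ b (1 + t)
  have ha' : b * (1 + t) ≤ a := by
    have h2θ : b ^ ((1:ℝ) + β) = b * b ^ β := by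
      rw [Real.rpow_add hb, Real.rpow_one]
    rw [h2θ] at hrec
    have : b * (1 + t) = b + C₀ * (b * b ^ β) := by rw [htdef]; ring
    rw [this]
    linarith
  -- a^(-β) ≤ b^(-β) (1+t)^(-β)
  have hmain : a ^ (-β) ≤ b ^ (-β) * (1 + t) ^ (-β) := by
    calc a ^ (-β) ≤ (b * (1 + t)) ^ (-β) :=
          Real.rpow_le_rpow_of_nonpos (by positivity) ha' (neg_nonpos.2 hβ.le)
      _ = b ^ (-β) * (1 + t) ^ (-β) :=
          Real.mul_rpow hb.le (by linarith)
  set B : ℝ := b ^ (-β) with hBdef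
  have hB : 0 < B := Real.rpow_pos_of_pos hb (-β)
  have hBt : B * t = C₀ := by
    have h6 : b ^ (-β) * b ^ β = 1 := by
      rw [← Real.rpow_add hb]; simp
    calc B * t = C₀ * (b ^ (-β) * b ^ β) := by rw [hBdef, htdef]; ring
      _ = C₀ := by rw [h6, mul_one]
  clear_value B
  have htT : t ≤ T := hbT
  -- B * u * (1 + t) = C₀
  have hBu : B * u * (1 + t) = C₀ := by
    have h1t : (1 : ℝ) + t ≠ 0 := by linarith
    rw [hudef]
    field_simp
    linarith [hBt]
  -- final arithmetic: c ≤ B - B * (1 + β u)⁻¹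
  have hfinal : β * C₀ / ((1 + T) * (1 + T)) ≤ B - B * (1 + β * u)⁻¹ := by
    have h7 : B - B * (1 + β * u)⁻¹ = B * (β * u) * (1 + β * u)⁻¹ := by
      field_simp
      ring
    rw [h7]
    have h8 : B * (β * u) = β * C₀ / (1 + t) := by
      rw [eq_div_iff (by linarith : (1:ℝ) + t ≠ 0)]
      nlinarith [hBu]
    rw [h8]
    have h9 : (1 + T)⁻¹ ≤ (1 + β * u)⁻¹ := by
      apply inv_anti₀ hD
      have := mul_le_of_le_one_left hu0.le hβ1.le
      linarith
    have h10 : β * C₀ / (1 + T) ≤ β * C₀ / (1 + t) := by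
      rw [div_eq_mul_inv, div_eq_mul_inv]
      have h10a : (1 + T)⁻¹ ≤ (1 + t)⁻¹ :=
        inv_anti₀ (by linarith) (by linarith)
      exact mul_le_mul_of_nonneg_left h10a (by positivity)
    calc β * C₀ / ((1 + T) * (1 + T)) = β * C₀ / (1 + T) * (1 + T)⁻¹ := by
          rw [← div_div, div_eq_mul_inv]
      _ ≤ β * C₀ / (1 + t) * (1 + β * u)⁻¹ := by
          apply mul_le_mul h10 h9 (by positivity) (by positivity)
  have h11 : B * (1 + t) ^ (-β) ≤ B * (1 + β * u)⁻¹ :=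
    mul_le_mul_of_nonneg_left hinv hB.le
  linarith

/-- KL rate, case `θ ∈ [1/2, 1)`: if a nonincreasing positive sequence `e` converging to `0`
satisfies `e (n - l₀) - e n ≥ C₀ e n ^ (2θ)` for all `n ≥ n₀`, then there is `C₂ > 0` with
`e n ≤ C₂ (n - l₀ + 1)^{-1/(2θ-1)}` for all `n ≥ n₀ + l₀`. -/
theorem kl_rate_sublinear (e : ℕ → ℝ) (hpos : ∀ n, 0 < e n) (hmono : Antitone e)
    (hlim : Tendsto e atTop (𝓝 0)) (l₀ n₀ : ℕ) (hl₀ : 1 ≤ l₀) (hn₀ : l₀ ≤ n₀)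
    (C₀ θ : ℝ) (hC₀ : 0 < C₀) (hθ : θ ∈ Set.Ico (1 / 2 : ℝ) 1)
    (hrec : ∀ n ≥ n₀, C₀ * e n ^ (2 * θ) ≤ e (n - l₀) - e n) :
    ∃ C₂ > (0 : ℝ), ∀ n ≥ n₀ + l₀,
      e n ≤ C₂ * ((n : ℝ) - l₀ + 1) ^ (-(1 / (2 * θ - 1))) := by
  obtain ⟨hθ1, hθ2⟩ := hθ
  rcases eq_or_lt_of_le hθ1 with heq | hlt
  · -- θ = 1/2 : exponent is -(1/0) = 0, trivial bound by e 0
    refine ⟨e 0, hpos 0, fun n _ => ?_⟩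
    have h0 : 2 * θ - 1 = 0 := by rw [← heq]; ring
    rw [h0]
    norm_num
    exact hmono (Nat.zero_le n)
  · -- θ > 1/2
    set β : ℝ := 2 * θ - 1 with hβdef
    have hβ : 0 < β := by simp only [hβdef]; linarith
    have hβ1 : β < 1 := by simp only [hβdef]; linarith
    set T : ℝ := C₀ * e 0 ^ β with hTdef
    have hT : 0 < T := mul_pos hC₀ (Real.rpow_pos_of_pos (hpos 0) β)
    set c : ℝ := β * C₀ / ((1 + T) * (1 + T)) with hcdef
    have hc : 0 < c := by positivity
    clear_value T
    -- the key step inequality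
    have hstep : ∀ n, n₀ ≤ n → e (n - l₀) ^ (-β) + c ≤ e n ^ (-β) := by
      intro n hn
      rw [hcdef]
      apply kl_step_aux _ _ _ _ _ (hpos (n - l₀)) (hpos n) hβ hβ1 hC₀ hT
      · rw [hTdef]
        have : e n ^ β ≤ e 0 ^ β :=
          Real.rpow_le_rpow (hpos n).le (hmono (Nat.zero_le n)) hβ.le
        nlinarith
      · have h2θ : (2:ℝ) * θ = 1 + β := by rw [hβdef]; ring
        rw [← h2θ]
        exact hrec n hn
    clear_value c
    -- induction along strides of l₀
    have hind : ∀ k : ℕ, ∀ n : ℕ, n₀ + k * l₀ ≤ n → ((k : ℝ) + 1) * c ≤ e n ^ (-β) := by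
      intro k
      induction k with
      | zero =>
        intro n hn
        simp only [Nat.cast_zero, zero_add, zero_mul, add_zero] at hn ⊢
        have h1 := hstep n (by omega)
        have h2 := Real.rpow_pos_of_pos (hpos (n - l₀)) (-β)
        norm_num
        linarith
      | succ k ih =>
        intro n hn
        have hmul : (k + 1) * l₀ = k * l₀ + l₀ := by ring
        have hn' : n₀ + k * l₀ ≤ n - l₀ := by omega
        have h1 := ih (n - l₀) hn'
        have h2 := hstep n (by omega)
        push_cast
        push_cast at h1
        linarith
    -- conclude
    set L : ℝ := (l₀ : ℝ) * ((n₀ : ℝ) + 2) with hLdef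
    have hL : 0 < L := by
      have : (1:ℝ) ≤ (l₀:ℝ) := by exact_mod_cast hl₀
      positivity
    set c' : ℝ := c / L with hc'def
    have hc' : 0 < c' := div_pos hc hL
    refine ⟨c' ^ (-(1 / β)), Real.rpow_pos_of_pos hc' _, fun n hn => ?_⟩
    set k : ℕ := (n - n₀) / l₀ with hkdef
    have hk1 : n₀ + k * l₀ ≤ n := by
      have h := Nat.div_mul_le_self (n - n₀) l₀
      rw [← hkdef] at h
      omega
    have hk2 : n - n₀ < (k + 1) * l₀ := by
      have h1 := Nat.div_add_mod (n - n₀) l₀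
      rw [← hkdef] at h1
      have h2 := Nat.mod_lt (n - n₀) (by omega : 0 < l₀)
      have h3 : (k + 1) * l₀ = l₀ * k + l₀ := by ring
      omega
    have hEn := hind k n hk1
    set m : ℝ := (n : ℝ) - (l₀ : ℝ) + 1 with hmdef
    have hm : 0 < m := by
      have h1 : (n₀ : ℝ) + (l₀ : ℝ) ≤ (n : ℝ) := by exact_mod_cast hn
      have h2 : (0:ℝ) ≤ (n₀ : ℝ) := Nat.cast_nonneg _
      simp only [hmdef]; linarith
    -- m ≤ (k+1) * L
    have hkL : m ≤ ((k : ℝ) + 1) * L := by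
      have hcast : (n : ℝ) - (n₀ : ℝ) < ((k : ℝ) + 1) * (l₀ : ℝ) := by
        have h1 : ((n - n₀ : ℕ) : ℝ) < (((k + 1) * l₀ : ℕ) : ℝ) := by exact_mod_cast hk2
        have h2 : (n₀ : ℝ) ≤ (n : ℝ) := by
          have : n₀ ≤ n := by omega
          exact_mod_cast this
        rw [Nat.cast_sub (by omega)] at h1
        push_cast at h1
        linarith
      have hl₀R : (1:ℝ) ≤ (l₀ : ℝ) := by exact_mod_cast hl₀
      have hn₀R : (l₀ : ℝ) ≤ (n₀ : ℝ) := by exact_mod_cast hn₀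
      have hnR : (n₀ : ℝ) + (l₀ : ℝ) ≤ (n : ℝ) := by exact_mod_cast hn
      have hk0 : (0:ℝ) ≤ (k : ℝ) := Nat.cast_nonneg _
      simp only [hmdef, hLdef]
      nlinarith [mul_nonneg hk0 (by linarith : (0:ℝ) ≤ (l₀ : ℝ))]
    have hlow : c' * m ≤ e n ^ (-β) := by
      have h1 : c' * m ≤ ((k : ℝ) + 1) * c := by
        rw [hc'def]
        rw [div_mul_eq_mul_div, div_le_iff₀ hL]
        calc c * m ≤ c * (((k : ℝ) + 1) * L) := by
              exact mul_le_mul_of_nonneg_left hkL hc.le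
          _ = ((k : ℝ) + 1) * c * L := by ring
      linarith
    have hcm : 0 < c' * m := mul_pos hc' hm
    -- apply x ↦ x^(-(1/β))
    have h2 : (e n ^ (-β)) ^ (-(1 / β)) ≤ (c' * m) ^ (-(1 / β)) :=
      Real.rpow_le_rpow_of_nonpos hcm hlow (neg_nonpos.2 (by positivity))
    have h3 : (e n ^ (-β)) ^ (-(1 / β)) = e n := by
      rw [← Real.rpow_mul (hpos n).le, neg_mul_neg, mul_one_div,
        div_self (ne_of_gt hβ), Real.rpow_one]
    have h4 : (c' * m) ^ (-(1 / β)) = c' ^ (-(1 / β)) * m ^ (-(1 / β)) :=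
      Real.mul_rpow hc'.le hm.le
    rw [h3, h4] at h2
    exact h2
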